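/- Let {i,j} = {1,2} and let n, m, k, l ≥ 1 be integers. The digital rectangles (I_{n,m},c_i,c_j) and (I_{k,l},c_i,c_j) are isomorphic as digital pictures if and only if {n,m} = {k,l} (as unordered pairs). -/

import Mathlib

/-- Points of the digital plane. -/
abbrev Pt : Type := ℤ × ℤ

/-- `c_i`-adjacency on `ℤ²` (for `i = 1` or `i = 2`). -/
def cAdj (i : ℕ) (x y : Pt) : Prop :=
  if i = 1 then |x.1 - y.1| + |x.2 - y.2| ≤ 1
  else |x.1 - y.1| ≤ 1 ∧ |x.2 - y.2| ≤ 1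

/-- The adjacency induced on a subset of `ℤ²`. -/
def subAdj (i : ℕ) (X : Set Pt) (x y : X) : Prop := cAdj i x.1 y.1

/-- Digital continuity of a map between digital images. -/
def DigCont {α β : Type} (κ : α → α → Prop) (δ : β → β → Prop) (f : α → β) : Prop :=
  ∀ x y, κ x y → δ (f x) (f y)

/-- The standard (`c_1`) adjacency on `ℕ`, used for digital intervals. -/
def natAdj (s t : ℕ) : Prop := s = t ∨ s + 1 = t ∨ t + 1 = s

/-- The two normal product adjacencies on `α × ℕ`. -/
def prodAdj (i : ℕ) {α : Type} (κ : α → α → Prop) (p q : α × ℕ) : Prop :=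
  if i = 1 then (κ p.1 q.1 ∧ p.2 = q.2) ∨ (p.1 = q.1 ∧ natAdj p.2 q.2)
  else κ p.1 q.1 ∧ natAdj p.2 q.2

/-- `f` and `g` are `i`-homotopic: there is a continuous
`H : X ×_i [0,m]_ℤ → Y` with `H(·,0) = f` and `H(·,m) = g`. -/
def Homotopic (i : ℕ) {α β : Type} (κ : α → α → Prop) (δ : β → β → Prop)
    (f g : α → β) : Prop :=
  ∃ (m : ℕ) (H : α → ℕ → β),
    (∀ x, H x 0 = f x) ∧ (∀ x, H x m = g x) ∧
    (∀ x y s t, s ≤ m → t ≤ m → prodAdj i κ (x, s) (y, t) → δ (H x s) (H y t))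

/-- `i`-homotopy equivalence of digital images. -/
def HtpyEquiv (i : ℕ) {α β : Type} (κ : α → α → Prop) (δ : β → β → Prop) : Prop :=
  ∃ (f : α → β) (g : β → α),
    DigCont κ δ f ∧ DigCont δ κ g ∧
    Homotopic i κ κ (g ∘ f) id ∧ Homotopic i δ δ (f ∘ g) id

/-- Homotopy equivalence of digital pictures `(X, c_i, c_j)` and `(Y, c_i, c_j)`. -/
def PicHtpyEquiv (i j : ℕ) (X Y : Set Pt) : Prop :=
  HtpyEquiv i (subAdj i X) (subAdj i Y) ∧ HtpyEquiv j (subAdj j Xᶜ) (subAdj j Yᶜ)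

/-- Isomorphism of digital images: a continuous bijection with continuous inverse. -/
def DigIso {α β : Type} (κ : α → α → Prop) (δ : β → β → Prop) : Prop :=
  ∃ e : α ≃ β, DigCont κ δ ⇑e ∧ DigCont δ κ ⇑e.symm

/-- Isomorphism of digital pictures. -/
def PicIso (i j : ℕ) (X Y : Set Pt) : Prop :=
  DigIso (subAdj i X) (subAdj i Y) ∧ DigIso (subAdj j Xᶜ) (subAdj j Yᶜ)

/-- `x` and `y` are joined by a `c_i`-path inside `A`. -/
def ChainIn (i : ℕ) (A : Set Pt) (x y : Pt) : Prop :=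
  ∃ (n : ℕ) (c : ℕ → Pt), c 0 = x ∧ c n = y ∧ (∀ k ≤ n, c k ∈ A) ∧
    ∀ k < n, cAdj i (c k) (c (k + 1))

/-- `A` is `c_i`-connected. -/
def Conn (i : ℕ) (A : Set Pt) : Prop := ∀ x ∈ A, ∀ y ∈ A, ChainIn i A x y

/-- The `c_i`-component of `p` in `A`. -/
def compOf (i : ℕ) (A : Set Pt) (p : Pt) : Set Pt := {y | ChainIn i A p y}

/-- The digital picture `(X, c_i, c_j)` has no hole: every `c_j`-component
of the complement of `X` is infinite. -/
def NoHole (j : ℕ) (X : Set Pt) : Prop := ∀ p ∈ Xᶜ, (compOf j Xᶜ p).Infinite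

/-- The row of `X` at height `k`. -/
def rowOf (X : Set Pt) (k : ℤ) : Set Pt := X ∩ {p | p.2 = k}

/-- `r` is a row component of `(X, c_i)`: a `c_i`-component of a row of `X`. -/
def IsRowComp (i : ℕ) (X : Set Pt) (r : Set Pt) : Prop :=
  ∃ (k : ℤ) (p : Pt), p ∈ rowOf X k ∧ r = compOf i (rowOf X k) p

/-- Two subsets of `ℤ²` are `c_i`-adjacent. -/
def setAdj (i : ℕ) (A B : Set Pt) : Prop := ∃ a ∈ A, ∃ b ∈ B, cAdj i a b

/-- The edge relation of the row component graph `R(X, c_i)`: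
two distinct row components joined when they are `c_i`-adjacent. -/
def rcgAdj (i : ℕ) (X : Set Pt) (r s : Set Pt) : Prop :=
  IsRowComp i X r ∧ IsRowComp i X s ∧ r ≠ s ∧ setAdj i r s

/-- The row component graph `R(X, c_i)` is acyclic: there is no cycle of
`k ≥ 3` distinct row components with consecutive ones adjacent. -/
def RCGAcyclic (i : ℕ) (X : Set Pt) : Prop :=
  ¬ ∃ (k : ℕ) (r : ℕ → Set Pt), 3 ≤ k ∧
    (∀ t < k, IsRowComp i X (r t)) ∧
    (∀ t < k, ∀ t' < k, r t = r t' → t = t') ∧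
    (∀ t, t + 1 < k → rcgAdj i X (r t) (r (t + 1))) ∧
    rcgAdj i X (r (k - 1)) (r 0)

/-- The row component graph `R(X, c_i)` is connected. -/
def RCGConnected (i : ℕ) (X : Set Pt) : Prop :=
  ∀ r s : Set Pt, IsRowComp i X r → IsRowComp i X s →
    Relation.ReflTransGen (rcgAdj i X) r s

/-- A digital image is `i`-contractible: the identity is `i`-homotopic to a constant map. -/
def Contractible (i : ℕ) {α : Type} (κ : α → α → Prop) : Prop :=
  ∃ x₀ : α, Homotopic i κ κ id (fun _ => x₀)

/-- Row-convexity. -/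
def RowConvex (X : Set Pt) : Prop :=
  ∀ a b c k : ℤ, (a, k) ∈ X → (c, k) ∈ X → a ≤ b → b ≤ c → (b, k) ∈ X

/-- Column-convexity. -/
def ColConvex (X : Set Pt) : Prop :=
  ∀ a b c k : ℤ, (k, a) ∈ X → (k, c) ∈ X → a ≤ b → b ≤ c → (k, b) ∈ X

/-- The row-convex hull of `X`. -/
def Hr (X : Set Pt) : Set Pt := ⋂₀ {S | RowConvex S ∧ X ⊆ S}

/-- The column-convex hull of `X`. -/
def Hc (X : Set Pt) : Set Pt := ⋂₀ {S | ColConvex S ∧ X ⊆ S}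

/-- The rc-convex hull of `X`. -/
def Hrc (X : Set Pt) : Set Pt := ⋂₀ {S | (RowConvex S ∧ ColConvex S) ∧ X ⊆ S}

/-- A loop of length `m` inside `Z`: a continuous `γ : [0,m]_ℤ → Z` with `γ 0 = γ m`. -/
def LoopIn (j : ℕ) (Z : Set Pt) (m : ℕ) (γ : ℕ → Pt) : Prop :=
  γ 0 = γ m ∧ (∀ t ≤ m, γ t ∈ Z) ∧ ∀ t < m, cAdj j (γ t) (γ (t + 1))

/-- The loop `γ` is `j`-contractible in `Z`: there is a `j`-homotopy in `Z` from `γ`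
to the constant loop at `γ 0` whose every stage is a loop based at `γ 0`. -/
def LoopContractibleIn (j : ℕ) (Z : Set Pt) (m : ℕ) (γ : ℕ → Pt) : Prop :=
  ∃ (K : ℕ) (H : ℕ → ℕ → Pt),
    (∀ t, H t 0 = γ t) ∧ (∀ t, H t K = γ 0) ∧
    (∀ k ≤ K, H 0 k = γ 0 ∧ H m k = γ 0) ∧
    (∀ t ≤ m, ∀ k ≤ K, H t k ∈ Z) ∧
    (∀ s t k l, s ≤ m → t ≤ m → k ≤ K → l ≤ K →
      prodAdj j natAdj (s, k) (t, l) → cAdj j (H s k) (H t l))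

/-- The union of the infinite `c_j`-components of the complement of `X`. -/
def InfPart (j : ℕ) (X : Set Pt) : Set Pt := {p | p ∈ Xᶜ ∧ (compOf j Xᶜ p).Infinite}

/-- The outer perimeter of the digital picture `(X, c_i, c_j)`: the least length of a
non-`j`-contractible loop in the infinite component of the complement of `X`, or `1`
if no such loop exists.  (It depends only on `j` and `X`.) -/
noncomputable def outerPerim (j : ℕ) (X : Set Pt) : ℕ := by
  classical
  exact if (∃ m γ, LoopIn j (InfPart j X) m γ ∧ ¬ LoopContractibleIn j (InfPart j X) m γ)
    then sInf {m | ∃ γ, LoopIn j (InfPart j X) m γ ∧ ¬ LoopContractibleIn j (InfPart j X) m γ}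
    else 1

/-- The digital rectangle `I_{n,m} = [1,n]_ℤ × [1,m]_ℤ`. -/
def Irect (n m : ℤ) : Set Pt := Set.Icc 1 n ×ˢ Set.Icc 1 m

/-- A finite digital image is `i`-reducible when it is `i`-homotopy equivalent to a
digital image with strictly fewer points. -/
def Reducible (i : ℕ) {α : Type} (κ : α → α → Prop) : Prop :=
  ∃ (β : Type) (δ : β → β → Prop), Reflexive δ ∧ Symmetric δ ∧ Finite β ∧
    Nat.card β < Nat.card α ∧ HtpyEquiv i κ δ


section AuxStmt4
open Finset

instance cAdj.dec (i : ℕ) (x y : Pt) : Decidable (cAdj i x y) := by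
  unfold cAdj; infer_instance

lemma cAdj_swap {i : ℕ} {x y : Pt} (h : cAdj i x y) : cAdj i x.swap y.swap := by
  by_cases hi : i = 1 <;> simp only [cAdj, hi, if_true, if_false, Prod.fst_swap, Prod.snd_swap,
    reduceIte] at h ⊢
  · linarith
  · exact ⟨h.2, h.1⟩

def D1 : Finset (ℤ × ℤ) := {(0,0),(1,0),(-1,0),(0,1),(0,-1)}
def D2 : Finset (ℤ × ℤ) := {(0,0),(1,0),(-1,0),(0,1),(0,-1),(1,1),(1,-1),(-1,1),(-1,-1)}

lemma cAdj1_iff (x y : Pt) : cAdj 1 x y ↔ (x.1 - y.1, x.2 - y.2) ∈ D1 := by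
  unfold cAdj
  rw [if_pos rfl]
  simp only [D1, Finset.mem_insert, Finset.mem_singleton, Prod.mk.injEq, Int.abs_eq_natAbs]
  omega

lemma cAdj2_iff (x y : Pt) : cAdj 2 x y ↔ (x.1 - y.1, x.2 - y.2) ∈ D2 := by
  unfold cAdj
  rw [if_neg (by norm_num)]
  simp only [D2, Finset.mem_insert, Finset.mem_singleton, Prod.mk.injEq, Int.abs_eq_natAbs]
  omega

lemma card_slide (n d : ℤ) :
    ((Finset.Icc (1:ℤ) n ×ˢ Finset.Icc (1:ℤ) n).filter fun p => p.1 - p.2 = d).card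
      = (n - |d|).toNat := by
  have himg : ((Finset.Icc (1:ℤ) n ×ˢ Finset.Icc (1:ℤ) n).filter fun p => p.1 - p.2 = d)
      = (Finset.Icc (max 1 (1 - d)) (min n (n - d))).image (fun c => (c + d, c)) := by
    ext ⟨a, c⟩
    simp only [Finset.mem_filter, Finset.mem_product, Finset.mem_Icc, Finset.mem_image,
      Prod.mk.injEq]
    constructor
    · rintro ⟨⟨⟨ha1, ha2⟩, hc1, hc2⟩, hd⟩
      exact ⟨c, by omega, by omega, rfl⟩
    · rintro ⟨b, ⟨hb1, hb2⟩, h1, h2⟩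
      omega
  rw [himg, Finset.card_image_of_injective _ (fun a b h => by
    simpa using (Prod.ext_iff.1 h).2), Int.card_Icc]
  simp only [Int.abs_eq_natAbs]
  omega

noncomputable def FR (n m : ℤ) : Finset Pt := Finset.Icc (1:ℤ) n ×ˢ Finset.Icc (1:ℤ) m

lemma card_diff2 (n m d e : ℤ) :
    ((FR n m ×ˢ FR n m).filter fun p => p.1.1 - p.2.1 = d ∧ p.1.2 - p.2.2 = e).card
      = (n - |d|).toNat * (m - |e|).toNat := by
  rw [← card_slide n d, ← card_slide m e, ← Finset.card_product]
  refine Finset.card_bij' (fun p _ => ((p.1.1, p.2.1), (p.1.2, p.2.2)))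
    (fun q _ => ((q.1.1, q.2.1), (q.1.2, q.2.2))) ?_ ?_ ?_ ?_
  · rintro ⟨⟨a, b⟩, ⟨c, d⟩⟩ hp
    simp only [FR, Finset.mem_filter, Finset.mem_product, Finset.mem_Icc] at hp ⊢
    tauto
  · rintro ⟨⟨a, c⟩, ⟨b, d⟩⟩ hq
    simp only [FR, Finset.mem_filter, Finset.mem_product, Finset.mem_Icc] at hq ⊢
    tauto
  · rintro ⟨⟨a, b⟩, ⟨c, d⟩⟩ _; rfl
  · rintro ⟨⟨a, c⟩, ⟨b, d⟩⟩ _; rfl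

lemma card_adj (i : ℕ) (D : Finset (ℤ × ℤ))
    (hD : ∀ x y : Pt, cAdj i x y ↔ (x.1 - y.1, x.2 - y.2) ∈ D) (n m : ℤ) :
    ((FR n m ×ˢ FR n m).filter fun p => cAdj i p.1 p.2).card
      = ∑ v ∈ D, (n - |v.1|).toNat * (m - |v.2|).toNat := by
  classical
  rw [Finset.card_eq_sum_card_fiberwise
    (f := fun p : Pt × Pt => (p.1.1 - p.2.1, p.1.2 - p.2.2)) (t := D)
    (fun p hp => (hD _ _).1 (Finset.mem_filter.1 hp).2)]
  refine Finset.sum_congr rfl fun v hv => ?_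
  rw [← card_diff2 n m v.1 v.2, Finset.filter_filter]
  congr 1
  apply Finset.filter_congr
  intro p _
  rw [Prod.ext_iff]
  constructor
  · exact fun h => h.2
  · intro h
    refine ⟨(hD _ _).2 ?_, h⟩
    have : (p.1.1 - p.2.1, p.1.2 - p.2.2) = v := Prod.ext h.1 h.2
    rw [this]; exact hv

lemma mem_FR_iff (n m : ℤ) (p : Pt) : p ∈ FR n m ↔ p ∈ Irect n m := by
  simp only [FR, Irect, Finset.mem_product, Finset.mem_Icc, Set.mem_prod, Set.mem_Icc]

lemma natCard_Irect (n m : ℤ) : Nat.card ↥(Irect n m) = n.toNat * m.toNat := by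
  have hset : Irect n m = (↑(FR n m) : Set Pt) := by
    ext p; rw [Finset.mem_coe, mem_FR_iff]
  rw [hset, Nat.card_coe_set_eq, Set.ncard_coe_finset, FR, Finset.card_product,
    Int.card_Icc, Int.card_Icc]
  congr 1 <;> omega

lemma natCard_pairs (i : ℕ) (n m : ℤ) :
    Nat.card {p : ↥(Irect n m) × ↥(Irect n m) // subAdj i (Irect n m) p.1 p.2}
      = ((FR n m ×ˢ FR n m).filter fun p => cAdj i p.1 p.2).card := by
  classical
  set F := (FR n m ×ˢ FR n m).filter fun p => cAdj i p.1 p.2 with hF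
  have hmemF : ∀ q : Pt × Pt, q ∈ F ↔ q.1 ∈ Irect n m ∧ q.2 ∈ Irect n m ∧ cAdj i q.1 q.2 := by
    intro q
    rw [hF, Finset.mem_filter, Finset.mem_product, mem_FR_iff, mem_FR_iff, and_assoc]
  have e : {p : ↥(Irect n m) × ↥(Irect n m) // subAdj i (Irect n m) p.1 p.2}
      ≃ ↥(↑F : Set (Pt × Pt)) :=
    { toFun := fun p => ⟨(↑p.1.1, ↑p.1.2),
        Finset.mem_coe.mpr ((hmemF ((p.1.1 : Pt), (p.1.2 : Pt))).2 ⟨p.1.1.2, p.1.2.2, p.2⟩)⟩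
      invFun := fun q => ⟨(⟨q.1.1, ((hmemF _).1 q.2).1⟩, ⟨q.1.2, ((hmemF _).1 q.2).2.1⟩),
        ((hmemF _).1 q.2).2.2⟩
      left_inv := by rintro ⟨⟨⟨x, hx⟩, ⟨y, hy⟩⟩, h⟩; rfl
      right_inv := by rintro ⟨⟨x, y⟩, h⟩; rfl }
  rw [Nat.card_congr e, Nat.card_coe_set_eq, Set.ncard_coe_finset]

lemma digIso_invariants {α β : Type} {κ : α → α → Prop} {δ : β → β → Prop}
    (h : DigIso κ δ) :
    Nat.card α = Nat.card β ∧
      Nat.card {p : α × α // κ p.1 p.2} = Nat.card {p : β × β // δ p.1 p.2} := by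
  obtain ⟨e, he, he'⟩ := h
  refine ⟨Nat.card_congr e, Nat.card_congr ?_⟩
  refine Equiv.subtypeEquiv (Equiv.prodCongr e e) fun p => ⟨fun hp => he _ _ hp, fun hp => ?_⟩
  have h2 := he' _ _ hp
  simpa using h2

lemma sum_D1 (n m : ℤ) (hn : 1 ≤ n) (hm : 1 ≤ m) :
    ((∑ v ∈ D1, (n - |v.1|).toNat * (m - |v.2|).toNat : ℕ) : ℤ)
      = n * m + 2 * ((n - 1) * m) + 2 * (n * (m - 1)) := by
  rw [show D1 = {(0,0),(1,0),(-1,0),(0,1),(0,-1)} from rfl, Finset.sum_insert (by decide),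
    Finset.sum_insert (by decide), Finset.sum_insert (by decide), Finset.sum_insert (by decide),
    Finset.sum_singleton]
  norm_num
  have h1 : ((n.toNat - 1 : ℕ) : ℤ) = n - 1 := by omega
  have h2 : ((m.toNat - 1 : ℕ) : ℤ) = m - 1 := by omega
  have h3 : n ⊔ 0 = n := sup_eq_left.2 (by omega)
  have h4 : m ⊔ 0 = m := sup_eq_left.2 (by omega)
  rw [h1, h2, h3, h4]
  ring

lemma sum_D2 (n m : ℤ) (hn : 1 ≤ n) (hm : 1 ≤ m) :
    ((∑ v ∈ D2, (n - |v.1|).toNat * (m - |v.2|).toNat : ℕ) : ℤ)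
      = n * m + 2 * ((n - 1) * m) + 2 * (n * (m - 1)) + 4 * ((n - 1) * (m - 1)) := by
  rw [show D2 = {(0,0),(1,0),(-1,0),(0,1),(0,-1),(1,1),(1,-1),(-1,1),(-1,-1)} from rfl,
    Finset.sum_insert (by decide), Finset.sum_insert (by decide), Finset.sum_insert (by decide),
    Finset.sum_insert (by decide), Finset.sum_insert (by decide), Finset.sum_insert (by decide),
    Finset.sum_insert (by decide), Finset.sum_insert (by decide), Finset.sum_singleton]
  norm_num
  have h1 : ((n.toNat - 1 : ℕ) : ℤ) = n - 1 := by omega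
  have h2 : ((m.toNat - 1 : ℕ) : ℤ) = m - 1 := by omega
  have h3 : n ⊔ 0 = n := sup_eq_left.2 (by omega)
  have h4 : m ⊔ 0 = m := sup_eq_left.2 (by omega)
  rw [h1, h2, h3, h4]
  ring

lemma key_arith (n m k l : ℤ) (hP : n * m = k * l) (hS : n + m = k + l) :
    (n = k ∧ m = l) ∨ (n = l ∧ m = k) := by
  have h0 : (k - n) * (k - m) = 0 := by linear_combination hP - k * hS
  rcases mul_eq_zero.1 h0 with h | h
  · left; constructor <;> omega
  · right; constructor <;> omega

lemma picIso_refl (i j : ℕ) (X : Set Pt) : PicIso i j X X :=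
  ⟨⟨Equiv.refl _, fun _ _ h => h, fun _ _ h => h⟩,
   ⟨Equiv.refl _, fun _ _ h => h, fun _ _ h => h⟩⟩

lemma picIso_swap (i j : ℕ) (n m : ℤ) : PicIso i j (Irect n m) (Irect m n) := by
  have hmem : ∀ p : Pt, p ∈ Irect n m ↔ (Equiv.prodComm ℤ ℤ) p ∈ Irect m n := by
    intro p
    simp only [Equiv.prodComm_apply, Irect, Set.mem_prod, Prod.fst_swap, Prod.snd_swap]
    tauto
  have hmemc : ∀ p : Pt, p ∈ (Irect n m)ᶜ ↔ (Equiv.prodComm ℤ ℤ) p ∈ (Irect m n)ᶜ := by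
    intro p
    simp only [Set.mem_compl_iff]
    exact not_iff_not.2 (hmem p)
  constructor
  · refine ⟨Equiv.subtypeEquiv (Equiv.prodComm ℤ ℤ) hmem, ?_, ?_⟩ <;>
      intro x y h <;> exact cAdj_swap h
  · refine ⟨Equiv.subtypeEquiv (Equiv.prodComm ℤ ℤ) hmemc, ?_, ?_⟩ <;>
      intro x y h <;> exact cAdj_swap h

end AuxStmt4

/-- digital rectangles `(I_{n,m},c_i,c_j)` and `(I_{k,l},c_i,c_j)` are
isomorphic as digital pictures iff `{n,m} = {k,l}` as unordered pairs. -/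
theorem stmt4 (i j : ℕ) (hij : (i = 1 ∧ j = 2) ∨ (i = 2 ∧ j = 1))
    (n m k l : ℤ) (hn : 1 ≤ n) (hm : 1 ≤ m) (hk : 1 ≤ k) (hl : 1 ≤ l) :
    PicIso i j (Irect n m) (Irect k l) ↔ ((n = k ∧ m = l) ∨ (n = l ∧ m = k)) := by
  constructor
  · intro h
    obtain ⟨hcard, hadj⟩ := digIso_invariants h.1
    rw [natCard_Irect, natCard_Irect] at hcard
    rw [natCard_pairs, natCard_pairs] at hadj
    have hP : n * m = k * l := by
      have := congrArg (fun t : ℕ => (t : ℤ)) hcard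
      push_cast at this
      rwa [Int.toNat_of_nonneg (by omega), Int.toNat_of_nonneg (by omega),
        Int.toNat_of_nonneg (by omega), Int.toNat_of_nonneg (by omega)] at this
    have hi : i = 1 ∨ i = 2 := by rcases hij with ⟨h1, _⟩ | ⟨h1, _⟩ <;> omega
    have hS : n + m = k + l := by
      rcases hi with rfl | rfl
      · rw [card_adj 1 D1 cAdj1_iff, card_adj 1 D1 cAdj1_iff] at hadj
        have hz : n * m + 2 * ((n - 1) * m) + 2 * (n * (m - 1))
            = k * l + 2 * ((k - 1) * l) + 2 * (k * (l - 1)) := by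
          rw [← sum_D1 n m hn hm, ← sum_D1 k l hk hl]
          exact_mod_cast hadj
        have h2 : 2 * n + 2 * m = 2 * k + 2 * l := by linear_combination 5 * hP - hz
        omega
      · rw [card_adj 2 D2 cAdj2_iff, card_adj 2 D2 cAdj2_iff] at hadj
        have hz : n * m + 2 * ((n - 1) * m) + 2 * (n * (m - 1)) + 4 * ((n - 1) * (m - 1))
            = k * l + 2 * ((k - 1) * l) + 2 * (k * (l - 1)) + 4 * ((k - 1) * (l - 1)) := by
          rw [← sum_D2 n m hn hm, ← sum_D2 k l hk hl]
          exact_mod_cast hadj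
        have h2 : 6 * n + 6 * m = 6 * k + 6 * l := by linear_combination 9 * hP - hz
        omega
    exact key_arith n m k l hP hS
  · rintro (⟨rfl, rfl⟩ | ⟨rfl, rfl⟩)
    · exact picIso_refl i j _
    · exact picIso_swap i j _ _
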